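/- For every n ≥ 4, the quiver Γ^{n}_{n−3,1,1} of coloured oriented single and paired diagonals of a regular n-gon, associated to the tree T_{n−3,1,1} = D_n, is isomorphic as a stable translation quiver to Z D_n/⟨τ^{-n} ρ^{n}⟩, the Auslander–Reiten quiver of the cluster category C_{D_n} = D^b(mod kD_n)/τ^{-1}Σ (on Z D_n the shift Σ acts as τ^{-(n−1)} composed with the diagram automorphism ρ when n is odd, and as τ^{-(n−1)} when n is even). -/

import Mathlib

/-!
Coloured oriented single and paired diagonals in a regular polygon, following
L. Lamberti, "Combinatorial model for the cluster categories of type E".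

The vertices of the regular `m`-gon `Π` are labelled by `ZMod m` (clockwise).
A coloured oriented diagonal `[i,j]_c` is encoded by the structure `Diag`;
the colour `P` encodes a *paired* diagonal `[i,j]_P = {[i,j]_R, [j,i]_B}`.
-/

inductive Colour : Type
  | R : Colour
  | B : Colour
  | P : Colour
deriving DecidableEq

/-- A coloured oriented (single or paired) diagonal `[i,j]_c` of the regular
`m`-gon (for `m = 0` we interpret `ZMod 0 = ℤ` as the infinite-sided polygon). -/
structure Diag (m : ℕ) where
  i : ZMod m
  j : ZMod m
  c : Colour
deriving DecidableEq

/-- The simultaneous change of colour and orientation: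
`ρ([i,j]_R) = [j,i]_B`, `ρ([i,j]_B) = [j,i]_R`, `ρ([i,j]_P) = [i,j]_P`. -/
def rho {m : ℕ} : Diag m → Diag m
  | ⟨i, j, Colour.R⟩ => ⟨j, i, Colour.B⟩
  | ⟨i, j, Colour.B⟩ => ⟨j, i, Colour.R⟩
  | ⟨i, j, Colour.P⟩ => ⟨i, j, Colour.P⟩

/-- The anticlockwise rotation `[i,j]_c ↦ [i-1,j-1]_c`. -/
def shiftD {m : ℕ} (d : Diag m) : Diag m := ⟨d.i - 1, d.j - 1, d.c⟩

/-- The slice of `Π_{r,s,t}` based at the vertex `i` of `Π`: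
the paired diagonals `[i,i+2]_P, …, [i,i+r+2]_P`, the red single diagonals
`[i,i+r+3]_R, …, [i,i+r+s+2]_R` and the blue single diagonals
`[i+r+3,i]_B, …, [i+r+t+2,i]_B`. -/
def PiSetAt (r s t : ℕ) {m : ℕ} (i : ZMod m) : Set (Diag m) :=
  {d | (∃ k : ℕ, 2 ≤ k ∧ k ≤ r + 2 ∧ d = ⟨i, i + (k : ZMod m), Colour.P⟩) ∨
       (∃ k : ℕ, r + 3 ≤ k ∧ k ≤ r + s + 2 ∧ d = ⟨i, i + (k : ZMod m), Colour.R⟩) ∨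
       (∃ k : ℕ, r + 3 ≤ k ∧ k ≤ r + t + 2 ∧ d = ⟨i + (k : ZMod m), i, Colour.B⟩)}

/-- The set `Π_{r,s,t}` of coloured oriented single and paired diagonals of the
regular `m`-gon associated to the tree `T_{r,s,t}`. -/
def PiSet (r s t m : ℕ) : Set (Diag m) := ⋃ i : ZMod m, PiSetAt r s t i

open Classical in
/-- The translation `τ` on coloured oriented diagonals: the anticlockwise
rotation `[i,j]_c ↦ [i-1,j-1]_c`, composed with `ρ^{m}` on the first slice
`Π_{r,s,t}|_1` when the tree is symmetric (`s = t`). -/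
noncomputable def tauD (r s t : ℕ) {m : ℕ} (d : Diag m) : Diag m :=
  if s = t ∧ d ∈ PiSetAt r s t (1 : ZMod m) then rho^[m] (shiftD d) else shiftD d

/-- Minimal clockwise rotations (before the colour adjustment at the seam):
`[k,l]_c → [k,l+1]_c`, `[k,l]_c → [k+1,l]_c`, together with
`[k,k+r+2]_P → [k,k+r+3]_R`, `[k,k+r+2]_P → [k+r+3,k]_B`,
`[k,k+r+3]_R → [k+1,k+r+3]_P` and `[k+r+3,k]_B → [k+1,k+r+3]_P`. -/
def Rot (r : ℕ) {m : ℕ} (a b : Diag m) : Prop :=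
  b = ⟨a.i, a.j + 1, a.c⟩ ∨ b = ⟨a.i + 1, a.j, a.c⟩ ∨
  (∃ k : ZMod m, a = ⟨k, k + ((r : ZMod m) + 2), Colour.P⟩ ∧
    (b = ⟨k, k + ((r : ZMod m) + 3), Colour.R⟩ ∨
     b = ⟨k + ((r : ZMod m) + 3), k, Colour.B⟩)) ∨
  (∃ k : ZMod m,
    (a = ⟨k, k + ((r : ZMod m) + 3), Colour.R⟩ ∨
     a = ⟨k + ((r : ZMod m) + 3), k, Colour.B⟩) ∧
    b = ⟨k + 1, k + ((r : ZMod m) + 3), Colour.P⟩)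

/-- In the symmetric case `s = t` with an odd-sided polygon, the arrows whose
source lies in `τ(Π_{r,t,t}|_1)` and whose (unadjusted) target lies in the
first slice `Π_{r,t,t}|_1` additionally change colour and orientation. -/
def SeamTwist (r s t m : ℕ) (a b₀ : Diag m) : Prop :=
  s = t ∧ Odd m ∧ a ∈ (tauD r s t) '' (PiSetAt r s t (1 : ZMod m)) ∧
    b₀ ∈ PiSetAt r s t (1 : ZMod m)

/-- The arrows of the quiver `Γ^{m}_{r,s,t}`: minimal clockwise rotations
between elements of `Π_{r,s,t}`, adjusted by `ρ` at the seam. -/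
def ArrowD (r s t m : ℕ) (a b : Diag m) : Prop :=
  a ∈ PiSet r s t m ∧ b ∈ PiSet r s t m ∧
    ∃ b₀, Rot r a b₀ ∧
      ((SeamTwist r s t m a b₀ ∧ b = rho b₀) ∨ (¬ SeamTwist r s t m a b₀ ∧ b = b₀))

/-- The vertices of the tree `T_{r,s,t}`: a central vertex together with three
legs having `r`, `s`, `t` vertices respectively. -/
inductive TVert (r s t : ℕ) : Type
  | center : TVert r s t
  | legA : Fin r → TVert r s t
  | legB : Fin s → TVert r s t
  | legC : Fin t → TVert r s t
deriving DecidableEq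

/-- An orientation of the tree `T_{r,s,t}`: the `A`-leg points towards the
centre, the `B`- and `C`-legs point away from it. -/
def TArrow {r s t : ℕ} (x y : TVert r s t) : Prop :=
  (∃ k l : Fin r, (l : ℕ) + 1 = (k : ℕ) ∧ x = TVert.legA k ∧ y = TVert.legA l) ∨
  (∃ k : Fin r, (k : ℕ) = 0 ∧ x = TVert.legA k ∧ y = TVert.center) ∨
  (∃ k : Fin s, (k : ℕ) = 0 ∧ x = TVert.center ∧ y = TVert.legB k) ∨
  (∃ k l : Fin s, (k : ℕ) + 1 = (l : ℕ) ∧ x = TVert.legB k ∧ y = TVert.legB l) ∨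
  (∃ k : Fin t, (k : ℕ) = 0 ∧ x = TVert.center ∧ y = TVert.legC k) ∨
  (∃ k l : Fin t, (k : ℕ) + 1 = (l : ℕ) ∧ x = TVert.legC k ∧ y = TVert.legC l)

/-- The order-two graph automorphism of a symmetric tree `T_{r,t,t}`,
exchanging its two legs of length `t`. -/
def treeRho {r t : ℕ} : TVert r t t → TVert r t t
  | TVert.center => TVert.center
  | TVert.legA k => TVert.legA k
  | TVert.legB k => TVert.legC k
  | TVert.legC k => TVert.legB k

/-- `treeRho` as a permutation. -/
def treeRhoPerm (r t : ℕ) : Equiv.Perm (TVert r t t) :=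
  Function.Involutive.toPerm treeRho (by intro x; cases x <;> rfl)

/-- The translation of the repetitive quiver `ℤQ`: `τ(m,i) = (m-1,i)`. -/
def ZTau {V : Type} (x : ℤ × V) : ℤ × V := (x.1 - 1, x.2)

/-- The arrows of the repetitive quiver `ℤQ` of a quiver with arrow relation
`A`: for each arrow `i → j` of `Q` there are arrows `(m,i) → (m,j)` and
`(m,j) → (m+1,i)`. -/
def ZArrow {V : Type} (A : V → V → Prop) (x y : ℤ × V) : Prop :=
  (y.1 = x.1 ∧ A x.2 y.2) ∨ (y.1 = x.1 + 1 ∧ A y.2 x.2)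

/-- The automorphism `τ^{-m} σ` of `ℤQ` given by shifting `m` steps to the
right and applying the graph automorphism `σ` of `Q`. -/
def shiftPerm {V : Type} (m : ℕ) (σ : Equiv.Perm V) : Equiv.Perm (ℤ × V) :=
  (Equiv.addRight (m : ℤ)).prodCongr σ

/-- `φ` exhibits the quiver `Γ^{m}_{r,s,t}` (with vertex set `PiSet r s t m`,
arrow relation `ArrowD` and translation `tauD`) as the quotient of the
repetitive quiver `ℤQ` (with arrow relation `ZArrow A` and translation `ZTau`)
by the cyclic group generated by the automorphism `g`, as stable translation
quivers: `φ` is surjective onto the vertex set, its fibres are exactly the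
`g`-orbits, it commutes with the translations, and the arrows of
`Γ^{m}_{r,s,t}` correspond exactly to the `g`-orbits of arrows of `ℤQ`. -/
def IsQuotientIso (r s t m : ℕ) {V : Type} (A : V → V → Prop)
    (g : Equiv.Perm (ℤ × V)) (φ : ℤ × V → Diag m) : Prop :=
  (∀ x, φ x ∈ PiSet r s t m) ∧
  (∀ d ∈ PiSet r s t m, ∃ x, φ x = d) ∧
  (∀ x y, φ x = φ y ↔ ∃ k : ℤ, (g ^ k) x = y) ∧
  (∀ x, φ (ZTau x) = tauD r s t (φ x)) ∧
  (∀ x y, ArrowD r s t m (φ x) (φ y) ↔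
    ∃ y', (∃ k : ℤ, (g ^ k) y = y') ∧ ZArrow A x y')

namespace GammaAux

/-- parity-twisted `treeRho` power -/
def tpow {r t : ℕ} (j : ℤ) (v : TVert r t t) : TVert r t t :=
  if Even j then v else treeRho v

/-- The isomorphism. -/
noncomputable def phi (n : ℕ) (x : ℤ × TVert (n - 3) 1 1) : Diag n :=
  match x.2 with
  | .center => ⟨(x.1 : ZMod n), (x.1 : ZMod n) - 1, Colour.P⟩
  | .legA a => ⟨(x.1 : ZMod n), (x.1 : ZMod n) - 2 - ((a : ℕ) : ZMod n), Colour.P⟩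
  | .legB _ => ⟨(x.1 : ZMod n), (x.1 : ZMod n),
      if Odd ((n : ℤ) * ((x.1 - 1) / n)) then Colour.B else Colour.R⟩
  | .legC _ => ⟨(x.1 : ZMod n), (x.1 : ZMod n),
      if Odd ((n : ℤ) * ((x.1 - 1) / n)) then Colour.R else Colour.B⟩

lemma rho_rho {m : ℕ} (d : Diag m) : rho (rho d) = d := by
  obtain ⟨i, j, c⟩ := d; cases c <;> rfl

lemma treeRho_treeRho {r t : ℕ} (v : TVert r t t) : treeRho (treeRho v) = v := by
  cases v <;> rfl

lemma rho_iter {m : ℕ} (k : ℕ) (d : Diag m) :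
    rho^[k] d = if k % 2 = 1 then rho d else d := by
  induction k with
  | zero => simp
  | succ k ih =>
    rw [Function.iterate_succ_apply', ih]
    rcases Nat.even_or_odd k with h | h
    · have h1 : k % 2 = 0 := Nat.even_iff.mp h
      have h2 : (k+1) % 2 = 1 := by omega
      simp [h1, h2]
    · have h1 : k % 2 = 1 := Nat.odd_iff.mp h
      have h2 : (k+1) % 2 = 0 := by omega
      simp [h1, h2, rho_rho]

lemma tpow_tpow {r t : ℕ} (i j : ℤ) (v : TVert r t t) :
    tpow j (tpow i v) = tpow (i + j) v := by
  by_cases hi : Even i <;> by_cases hj : Even j <;>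
    simp [tpow, hi, hj, Int.even_add, treeRho_treeRho]

lemma tpow_even {r t : ℕ} {j : ℤ} (h : Even j) (v : TVert r t t) : tpow j v = v :=
  if_pos h

lemma tpow_odd {r t : ℕ} {j : ℤ} (h : Odd j) (v : TVert r t t) : tpow j v = treeRho v :=
  if_neg (Int.not_even_iff_odd.mpr h)

section N
variable {n : ℕ} (hn : 4 ≤ n)
include hn

lemma hNZ : NeZero n := ⟨by omega⟩

lemma castn : ((n : ℕ) : ZMod n) = 0 := ZMod.natCast_self n

lemma cast3 : ((n - 3 : ℕ) : ZMod n) = -3 := by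
  have h : ((n - 3 + 3 : ℕ) : ZMod n) = 0 := by
    rw [show n - 3 + 3 = n by omega]; exact ZMod.natCast_self n
  push_cast at h
  linear_combination h

lemma natdvd_contra {a : ℕ} (h1 : 0 < a) (h2 : a < n) (h : ((a : ℕ) : ZMod n) = 0) : False := by
  haveI := hNZ hn
  have := (ZMod.natCast_eq_zero_iff a n).mp h
  have := Nat.le_of_dvd h1 this
  omega

lemma one_ne_zero' : (1 : ZMod n) ≠ 0 := by
  intro h
  exact natdvd_contra hn (a := 1) (by omega) (by omega) (by exact_mod_cast h)

lemma two_ne_zero' : (2 : ZMod n) ≠ 0 := by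
  intro h
  exact natdvd_contra hn (a := 2) (by omega) (by omega) (by exact_mod_cast h)

/-- generic contradiction: a Fin (n-3) cast cannot equal -1, -2, -3 -/
lemma finA_ne {a : Fin (n - 3)} {c : ℕ} (h1 : 0 < c) (h2 : c ≤ 3)
    (h : ((a : ℕ) : ZMod n) = -(c : ZMod n)) : False := by
  have hc : (((a : ℕ) + c : ℕ) : ZMod n) = 0 := by push_cast; linear_combination h
  have hlt := a.isLt
  exact natdvd_contra hn (by omega) (by omega) hc

lemma finA_inj {a b : Fin (n - 3)} (h : ((a : ℕ) : ZMod n) = ((b : ℕ) : ZMod n)) : a = b := by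
  haveI := hNZ hn
  have ha := a.isLt; have hb := b.isLt
  have := congrArg ZMod.val h
  rw [ZMod.val_cast_of_lt (by omega), ZMod.val_cast_of_lt (by omega)] at this
  exact Fin.ext this

lemma nat_inj {a b : ℕ} (ha : a < n) (hb : b < n) (h : ((a : ℕ) : ZMod n) = b) : a = b := by
  haveI := hNZ hn
  have := congrArg ZMod.val h
  rwa [ZMod.val_cast_of_lt ha, ZMod.val_cast_of_lt hb] at this

end N
end GammaAux
namespace GammaAux
section N2
variable {n : ℕ} (hn : 4 ≤ n)

lemma if_parity {α : Type} {i j : ℤ} (h : Even i ↔ Even j) (a b : α) :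
    (if Even i then a else b) = (if Even j then a else b) := by
  by_cases hi : Even i
  · rw [if_pos hi, if_pos (h.mp hi)]
  · rw [if_neg hi, if_neg (fun hj => hi (h.mpr hj))]

lemma tpow_parity {r t : ℕ} {i j : ℤ} (h : Even i ↔ Even j) (v : TVert r t t) :
    tpow i v = tpow j v := if_parity h _ _

include hn

lemma hn0 : ((n : ℤ)) ≠ 0 := by exact_mod_cast (by omega : n ≠ 0)

lemma sigma_pow (k : ℕ) (v : TVert (n-3) 1 1) :
    ((treeRhoPerm (n-3) 1) ^ k) v = if Even k then v else treeRho v := by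
  induction k with
  | zero => simp
  | succ k ih =>
    rw [pow_succ', Equiv.Perm.mul_apply, ih]
    by_cases h : Even k
    · rw [if_pos h, if_neg (by simp [Nat.even_add_one, h])]
      rfl
    · rw [if_neg h, if_pos (by simp [Nat.even_add_one, h])]
      show treeRho (treeRho v) = v
      exact treeRho_treeRho v

lemma g_step (a : ℤ) (v : TVert (n-3) 1 1) :
    (shiftPerm n ((treeRhoPerm (n - 3) 1) ^ n)) (a, v) = (a + n, tpow n v) := by
  show (a + (n:ℤ), ((treeRhoPerm (n-3) 1) ^ n) v) = _
  rw [sigma_pow hn]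
  congr 1
  by_cases h : Even n <;> simp [tpow, h, Int.even_coe_nat]

lemma g_inv (a : ℤ) (v : TVert (n-3) 1 1) :
    (shiftPerm n ((treeRhoPerm (n - 3) 1) ^ n))⁻¹ (a, v) = (a - n, tpow n v) := by
  apply (shiftPerm n ((treeRhoPerm (n - 3) 1) ^ n)).injective
  rw [Equiv.Perm.coe_inv, Equiv.apply_symm_apply, g_step hn, tpow_tpow,
    tpow_even ⟨(n:ℤ), by ring⟩, sub_add_cancel]

lemma g_zpow (k : ℤ) : ∀ (a : ℤ) (v : TVert (n-3) 1 1),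
    ((shiftPerm n ((treeRhoPerm (n - 3) 1) ^ n)) ^ k) (a, v)
      = (a + n * k, tpow (n * k) v) := by
  induction k using Int.induction_on with
  | zero => intro a v; simp [tpow]
  | succ k ih =>
    intro a v
    rw [zpow_add_one, Equiv.Perm.mul_apply, g_step hn, ih, tpow_tpow,
      show ((n:ℤ) + n * k) = n * (k + 1) from by ring]
    simp only [Prod.mk.injEq]
    exact ⟨by ring, trivial⟩
  | pred k ih =>
    intro a v
    rw [zpow_sub_one, Equiv.Perm.mul_apply, g_inv hn, ih, tpow_tpow]
    simp only [Prod.mk.injEq]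
    refine ⟨by ring, tpow_parity ?_ v⟩
    constructor <;> rintro ⟨c, hc⟩
    · exact ⟨c - n, by linear_combination hc⟩
    · exact ⟨c + n, by linear_combination hc⟩

lemma ediv_shift (m k : ℤ) : (m + n * k - 1) / n = (m - 1) / n + k := by
  rw [show m + (n:ℤ) * k - 1 = (m - 1) + k * n by ring,
    Int.add_mul_ediv_right _ _ (hn0 hn)]

lemma cast_int_eq_zero_iff (m : ℤ) : ((m : ZMod n) = 0) ↔ (n : ℤ) ∣ m := by
  haveI := hNZ hn
  exact ZMod.intCast_zmod_eq_zero_iff_dvd m n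

lemma cast_eq_one_iff (m : ℤ) : ((m : ZMod n) = 1) ↔ (n : ℤ) ∣ (m - 1) := by
  rw [← cast_int_eq_zero_iff hn]
  push_cast
  constructor <;> intro h <;> linear_combination h

lemma cast_int_inj (m m' : ℤ) (h : ((m : ZMod n) = (m' : ZMod n))) :
    ∃ k : ℤ, m' = m + n * k := by
  have : ((m' - m : ℤ) : ZMod n) = 0 := by push_cast; linear_combination h.symm
  obtain ⟨k, hk⟩ := (cast_int_eq_zero_iff hn _).mp this
  exact ⟨k, by omega⟩

lemma ediv_pred_dvd {m : ℤ} (h : (n:ℤ) ∣ m - 1) :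
    (m - 2) / n = (m - 1) / n - 1 := by
  obtain ⟨q, hq⟩ := h
  have h1 : (m - 1) / n = q := by rw [hq, Int.mul_ediv_cancel_left _ (hn0 hn)]
  have h2 : m - 2 = ((n:ℤ) - 1) + (q - 1) * n := by linear_combination hq
  rw [h1, h2, Int.add_mul_ediv_right _ _ (hn0 hn),
    Int.ediv_eq_zero_of_lt (by omega) (by omega)]
  ring

lemma ediv_pred_notdvd {m : ℤ} (h : ¬ (n:ℤ) ∣ m - 1) :
    (m - 2) / n = (m - 1) / n := by
  have hd := Int.mul_ediv_add_emod (m - 1) n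
  have hr0 : 0 ≤ (m - 1) % n := Int.emod_nonneg _ (hn0 hn)
  have hrn : (m - 1) % n < n := Int.emod_lt_of_pos _ (by omega)
  have hrne : (m - 1) % n ≠ 0 := fun hc => h (Int.dvd_of_emod_eq_zero hc)
  have h2 : m - 2 = ((m-1) % n - 1) + ((m-1)/n) * n := by linear_combination hd.symm
  rw [h2, Int.add_mul_ediv_right _ _ (hn0 hn),
    Int.ediv_eq_zero_of_lt (by omega) (by omega), zero_add]

end N2
end GammaAux
namespace GammaAux
section N3
variable {n : ℕ} (hn : 4 ≤ n)
include hn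

lemma val_cast (δ : ZMod n) : ((δ.val : ℕ) : ZMod n) = δ := by
  haveI := hNZ hn
  simp [ZMod.natCast_val]

lemma memP {i δ : ZMod n} (h0 : δ ≠ 0) (h1 : δ ≠ 1) :
    (⟨i, i + δ, Colour.P⟩ : Diag n) ∈ PiSetAt (n-3) 1 1 i := by
  haveI := hNZ hn
  left
  refine ⟨δ.val, ?_, ?_, ?_⟩
  · have hv0 : δ.val ≠ 0 := fun h => h0 ((ZMod.val_eq_zero δ).mp h)
    have hv1 : δ.val ≠ 1 := by
      intro h
      apply h1
      rw [← val_cast hn δ, h, Nat.cast_one]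
    omega
  · have := ZMod.val_lt δ
    omega
  · rw [val_cast hn δ]

lemma memR (i : ZMod n) : (⟨i, i, Colour.R⟩ : Diag n) ∈ PiSetAt (n-3) 1 1 i :=
  Or.inr (Or.inl ⟨n, by omega, by omega, by rw [ZMod.natCast_self, add_zero]⟩)

lemma memB (i : ZMod n) : (⟨i, i, Colour.B⟩ : Diag n) ∈ PiSetAt (n-3) 1 1 i :=
  Or.inr (Or.inr ⟨n, by omega, by omega, by rw [ZMod.natCast_self, add_zero]⟩)

lemma memAt_elim {d : Diag n} {i : ZMod n} (hd : d ∈ PiSetAt (n-3) 1 1 i) :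
    (∃ δ : ZMod n, δ ≠ 0 ∧ δ ≠ 1 ∧ d = ⟨i, i + δ, Colour.P⟩) ∨
      d = ⟨i, i, Colour.R⟩ ∨ d = ⟨i, i, Colour.B⟩ := by
  rcases hd with ⟨k, hk2, hk, rfl⟩ | ⟨k, hk1, hk2, rfl⟩ | ⟨k, hk1, hk2, rfl⟩
  · left
    refine ⟨(k : ZMod n), ?_, ?_, rfl⟩
    · intro h
      exact natdvd_contra hn (by omega) (by omega) h
    · intro h
      have h2 : (((k - 1 : ℕ)) : ZMod n) = 0 := by
        push_cast [Nat.cast_sub (by omega : 1 ≤ k)]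
        linear_combination h
      exact natdvd_contra hn (by omega) (by omega) h2
  · right; left
    have hk : k = n := by omega
    rw [hk, ZMod.natCast_self, add_zero]
  · right; right
    have hk : k = n := by omega
    rw [hk, ZMod.natCast_self, add_zero]

lemma slice_i {d : Diag n} {i : ZMod n} (hd : d ∈ PiSetAt (n-3) 1 1 i) : d.i = i := by
  rcases memAt_elim hn hd with ⟨δ, _, _, rfl⟩ | rfl | rfl <;> rfl

omit hn

lemma phi_i (x : ℤ × TVert (n-3) 1 1) : (phi n x).i = (x.1 : ZMod n) := by
  obtain ⟨m, v⟩ := x; cases v <;> rfl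

lemma phi_center (m : ℤ) :
    phi n (m, TVert.center) = ⟨(m : ZMod n), (m : ZMod n) - 1, Colour.P⟩ := rfl

lemma phi_legA (m : ℤ) (a : Fin (n-3)) :
    phi n (m, TVert.legA a)
      = ⟨(m : ZMod n), (m : ZMod n) - 2 - ((a:ℕ) : ZMod n), Colour.P⟩ := rfl

lemma phi_legB (m : ℤ) (b : Fin 1) :
    phi n (m, TVert.legB b) = ⟨(m : ZMod n), (m : ZMod n),
      if Odd ((n : ℤ) * ((m - 1) / n)) then Colour.B else Colour.R⟩ := rfl

lemma phi_legC (m : ℤ) (b : Fin 1) :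
    phi n (m, TVert.legC b) = ⟨(m : ZMod n), (m : ZMod n),
      if Odd ((n : ℤ) * ((m - 1) / n)) then Colour.R else Colour.B⟩ := rfl

include hn

lemma phi_mem (x : ℤ × TVert (n-3) 1 1) : phi n x ∈ PiSet (n-3) 1 1 n := by
  obtain ⟨m, v⟩ := x
  refine Set.mem_iUnion.mpr ⟨(m : ZMod n), ?_⟩
  cases v with
  | center =>
    rw [phi_center, show (m : ZMod n) - 1 = (m : ZMod n) + (-1) from by ring]
    refine memP hn ?_ ?_
    · intro h; exact one_ne_zero' hn (by linear_combination -h)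
    · intro h; exact two_ne_zero' hn (by linear_combination -h)
  | legA a =>
    rw [phi_legA, show (m : ZMod n) - 2 - ((a:ℕ) : ZMod n)
        = (m : ZMod n) + (-2 - ((a:ℕ) : ZMod n)) from by ring]
    refine memP hn ?_ ?_
    · intro h
      exact finA_ne hn (c := 2) (by omega) (by omega) (by push_cast; linear_combination -h)
    · intro h
      exact finA_ne hn (c := 3) (by omega) (by omega) (by push_cast; linear_combination -h)
  | legB b =>
    rw [phi_legB]
    by_cases h : Odd ((n : ℤ) * ((m - 1) / n))
    · rw [if_pos h]; exact memB hn _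
    · rw [if_neg h]; exact memR hn _
  | legC b =>
    rw [phi_legC]
    by_cases h : Odd ((n : ℤ) * ((m - 1) / n))
    · rw [if_pos h]; exact memR hn _
    · rw [if_neg h]; exact memB hn _

/-- inversion for paired targets -/
lemma phi_inv_P {y : ℤ × TVert (n-3) 1 1} {i j : ZMod n}
    (h : phi n y = ⟨i, j, Colour.P⟩) :
    (y.1 : ZMod n) = i ∧ ((y.2 = TVert.center ∧ j = i - 1) ∨
      ∃ a : Fin (n-3), y.2 = TVert.legA a ∧ j = i - 2 - ((a:ℕ) : ZMod n)) := by
  obtain ⟨m, v⟩ := y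
  cases v with
  | center =>
    rw [phi_center] at h
    simp only [Diag.mk.injEq] at h
    obtain ⟨h1, h2, -⟩ := h
    exact ⟨h1, Or.inl ⟨rfl, by rw [← h1, ← h2]⟩⟩
  | legA a =>
    rw [phi_legA] at h
    simp only [Diag.mk.injEq] at h
    obtain ⟨h1, h2, -⟩ := h
    exact ⟨h1, Or.inr ⟨a, rfl, by rw [← h1, ← h2]⟩⟩
  | legB b =>
    rw [phi_legB] at h
    simp only [Diag.mk.injEq] at h
    obtain ⟨-, -, h3⟩ := h
    split at h3 <;> exact Colour.noConfusion h3
  | legC b =>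
    rw [phi_legC] at h
    simp only [Diag.mk.injEq] at h
    obtain ⟨-, -, h3⟩ := h
    split at h3 <;> exact Colour.noConfusion h3

/-- off-diagonal inversion: non-paired values of φ have equal endpoints -/
lemma phi_offdiag {y : ℤ × TVert (n-3) 1 1} {i j : ZMod n} {c : Colour}
    (h : phi n y = ⟨i, j, c⟩) (hc : c ≠ Colour.P) : i = j := by
  obtain ⟨m, v⟩ := y
  cases v with
  | center => rw [phi_center] at h; cases h; exact absurd rfl hc
  | legA a => rw [phi_legA] at h; cases h; exact absurd rfl hc
  | legB b =>
    rw [phi_legB] at h; cases h; rfl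
  | legC b =>
    rw [phi_legC] at h; cases h; rfl

end N3
end GammaAux
namespace GammaAux
section N4
variable {n : ℕ} (hn : 4 ≤ n)

lemma if_odd_congr {α : Type} {a b : ℤ} (h : Odd a ↔ Odd b) (x y : α) :
    (if Odd a then x else y) = (if Odd b then x else y) := by
  by_cases ha : Odd a
  · rw [if_pos ha, if_pos (h.mp ha)]
  · rw [if_neg ha, if_neg (fun hb => ha (h.mpr hb))]

lemma if_odd_flip {α : Type} {a b : ℤ} (h : Odd a ↔ ¬ Odd b) (x y : α) :
    (if Odd a then x else y) = (if Odd b then y else x) := by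
  by_cases hb : Odd b
  · rw [if_pos hb, if_neg (fun ha => (h.mp ha) hb)]
  · rw [if_pos (h.mpr hb), if_neg hb]

include hn

lemma castnk {k : ℕ} (hk : k ≤ n) : ((n - k : ℕ) : ZMod n) = -(k : ZMod n) := by
  have h : ((n - k + k : ℕ) : ZMod n) = 0 := by
    rw [show n - k + k = n by omega]; exact ZMod.natCast_self n
  push_cast at h
  linear_combination h

lemma phi_memAt (m : ℤ) (v : TVert (n-3) 1 1) :
    phi n (m, v) ∈ PiSetAt (n-3) 1 1 ((m : ZMod n)) := by
  cases v with
  | center =>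
    rw [phi_center, show (m : ZMod n) - 1 = (m : ZMod n) + (-1) from by ring]
    refine memP hn ?_ ?_
    · intro h; exact one_ne_zero' hn (by linear_combination -h)
    · intro h; exact two_ne_zero' hn (by linear_combination -h)
  | legA a =>
    rw [phi_legA, show (m : ZMod n) - 2 - ((a:ℕ) : ZMod n)
        = (m : ZMod n) + (-2 - ((a:ℕ) : ZMod n)) from by ring]
    refine memP hn ?_ ?_
    · intro h
      exact finA_ne hn (c := 2) (by omega) (by omega) (by push_cast; linear_combination -h)
    · intro h
      exact finA_ne hn (c := 3) (by omega) (by omega) (by push_cast; linear_combination -h)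
  | legB b =>
    rw [phi_legB]
    by_cases h : Odd ((n : ℤ) * ((m - 1) / n))
    · rw [if_pos h]; exact memB hn _
    · rw [if_neg h]; exact memR hn _
  | legC b =>
    rw [phi_legC]
    by_cases h : Odd ((n : ℤ) * ((m - 1) / n))
    · rw [if_pos h]; exact memR hn _
    · rw [if_neg h]; exact memB hn _

/-- Part 2: surjectivity. -/
lemma phi_surj : ∀ d ∈ PiSet (n-3) 1 1 n, ∃ x, phi n x = d := by
  intro d hd
  obtain ⟨i, hi⟩ := Set.mem_iUnion.mp hd
  have hm : (((i.val : ℤ) : ZMod n)) = i := by push_cast; exact val_cast hn i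
  rcases memAt_elim hn hi with ⟨δ, h0, h1, rfl⟩ | rfl | rfl
  · by_cases hδ : δ = -1
    · refine ⟨((i.val : ℤ), TVert.center), ?_⟩
      rw [phi_center, hm, hδ]
      congr 1
      ring
    · have haval : (((-2 - δ : ZMod n).val : ℕ) : ZMod n) = -2 - δ := val_cast hn _
      haveI := hNZ hn
      have hlt : (-2 - δ : ZMod n).val < n := ZMod.val_lt _
      have ha3 : (-2 - δ : ZMod n).val < n - 3 := by
        by_contra hc
        have : (-2 - δ : ZMod n).val = n - 3 ∨ (-2 - δ : ZMod n).val = n - 2 ∨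
            (-2 - δ : ZMod n).val = n - 1 := by omega
        rcases this with h | h | h
        · rw [h, castnk hn (by omega)] at haval
          exact h1 (by push_cast at haval; linear_combination haval)
        · rw [h, castnk hn (by omega)] at haval
          exact h0 (by push_cast at haval; linear_combination haval)
        · rw [h, castnk hn (by omega)] at haval
          exact hδ (by push_cast at haval; linear_combination haval)
      refine ⟨((i.val : ℤ), TVert.legA ⟨_, ha3⟩), ?_⟩
      rw [phi_legA, hm]
      congr 1
      show (i : ZMod n) - 2 - (((-2 - δ : ZMod n).val : ℕ) : ZMod n) = i + δ
      rw [haval]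
      ring
  · by_cases h : Odd ((n : ℤ) * (((i.val : ℤ) - 1) / n))
    · exact ⟨((i.val : ℤ), TVert.legC 0), by rw [phi_legC, hm, if_pos h]⟩
    · exact ⟨((i.val : ℤ), TVert.legB 0), by rw [phi_legB, hm, if_neg h]⟩
  · by_cases h : Odd ((n : ℤ) * (((i.val : ℤ) - 1) / n))
    · exact ⟨((i.val : ℤ), TVert.legB 0), by rw [phi_legB, hm, if_pos h]⟩
    · exact ⟨((i.val : ℤ), TVert.legC 0), by rw [phi_legC, hm, if_neg h]⟩

/-- Part 3: fibres are orbits. -/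
lemma phi_fiber (x y : ℤ × TVert (n-3) 1 1) :
    phi n x = phi n y ↔
      ∃ k : ℤ, ((shiftPerm n ((treeRhoPerm (n - 3) 1) ^ n)) ^ k) x = y := by
  obtain ⟨mx, vx⟩ := x; obtain ⟨my, vy⟩ := y
  constructor
  · intro h
    have hi : ((mx : ZMod n)) = (my : ZMod n) := by
      have := congrArg Diag.i h; rwa [phi_i, phi_i] at this
    obtain ⟨k, hk⟩ := cast_int_inj hn _ _ hi
    refine ⟨k, ?_⟩
    rw [g_zpow hn]
    rw [Prod.mk.injEq]
    refine ⟨hk.symm, ?_⟩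
    have he : (my - 1) / n = (mx - 1) / n + k := by rw [hk]; exact ediv_shift hn mx k
    cases vx with
    | center =>
      cases vy with
      | center => unfold tpow; split <;> rfl
      | legA a =>
        rw [phi_center, phi_legA] at h
        simp only [Diag.mk.injEq] at h
        exact absurd (show ((a:ℕ) : ZMod n) = -((1:ℕ) : ZMod n) by
          push_cast; linear_combination h.2.1 - hi) (fun hc => finA_ne hn (c := 1) (by omega) (by omega) hc)
      | legB b =>
        rw [phi_center, phi_legB] at h
        simp only [Diag.mk.injEq] at h
        obtain ⟨-, -, h3⟩ := h
        split at h3 <;> exact Colour.noConfusion h3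
      | legC b =>
        rw [phi_center, phi_legC] at h
        simp only [Diag.mk.injEq] at h
        obtain ⟨-, -, h3⟩ := h
        split at h3 <;> exact Colour.noConfusion h3
    | legA a =>
      cases vy with
      | center =>
        rw [phi_legA, phi_center] at h
        simp only [Diag.mk.injEq] at h
        exact absurd (show ((a:ℕ) : ZMod n) = -((1:ℕ) : ZMod n) by
          push_cast; linear_combination hi - h.2.1) (fun hc => finA_ne hn (c := 1) (by omega) (by omega) hc)
      | legA a' =>
        rw [phi_legA, phi_legA] at h
        simp only [Diag.mk.injEq] at h
        have : a = a' := finA_inj hn (by linear_combination hi - h.2.1)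
        rw [this]
        unfold tpow; split <;> rfl
      | legB b =>
        rw [phi_legA, phi_legB] at h
        simp only [Diag.mk.injEq] at h
        obtain ⟨-, -, h3⟩ := h
        split at h3 <;> exact Colour.noConfusion h3
      | legC b =>
        rw [phi_legA, phi_legC] at h
        simp only [Diag.mk.injEq] at h
        obtain ⟨-, -, h3⟩ := h
        split at h3 <;> exact Colour.noConfusion h3
    | legB b =>
      cases vy with
      | center =>
        rw [phi_legB, phi_center] at h
        simp only [Diag.mk.injEq] at h
        obtain ⟨-, -, h3⟩ := h
        split at h3 <;> exact Colour.noConfusion h3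
      | legA a =>
        rw [phi_legB, phi_legA] at h
        simp only [Diag.mk.injEq] at h
        obtain ⟨-, -, h3⟩ := h
        split at h3 <;> exact Colour.noConfusion h3
      | legB b' =>
        rw [phi_legB, phi_legB] at h
        simp only [Diag.mk.injEq] at h
        obtain ⟨-, -, h3⟩ := h
        have hiff : Odd ((n:ℤ) * ((mx - 1) / n)) ↔ Odd ((n:ℤ) * ((my - 1) / n)) := by
          by_cases hx : Odd ((n:ℤ) * ((mx - 1) / n)) <;>
            by_cases hy : Odd ((n:ℤ) * ((my - 1) / n)) <;>
            simp [hx, hy] at h3 ⊢ <;> exact Colour.noConfusion h3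
        have hev : Even ((n:ℤ) * k) := by
          rw [he, mul_add, Int.odd_add] at hiff
          tauto
        rw [tpow_even hev]
        rw [Subsingleton.elim b b']
      | legC b' =>
        rw [phi_legB, phi_legC] at h
        simp only [Diag.mk.injEq] at h
        obtain ⟨-, -, h3⟩ := h
        have hiff : Odd ((n:ℤ) * ((mx - 1) / n)) ↔ ¬ Odd ((n:ℤ) * ((my - 1) / n)) := by
          by_cases hx : Odd ((n:ℤ) * ((mx - 1) / n)) <;>
            by_cases hy : Odd ((n:ℤ) * ((my - 1) / n)) <;>
            simp [hx, hy] at h3 ⊢ <;> exact Colour.noConfusion h3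
        have hod : Odd ((n:ℤ) * k) := by
          rw [he, mul_add, Int.odd_add, ← Int.not_odd_iff_even] at hiff
          tauto
        rw [tpow_odd hod]
        show TVert.legC b = _
        rw [Subsingleton.elim b b']
    | legC b =>
      cases vy with
      | center =>
        rw [phi_legC, phi_center] at h
        simp only [Diag.mk.injEq] at h
        obtain ⟨-, -, h3⟩ := h
        split at h3 <;> exact Colour.noConfusion h3
      | legA a =>
        rw [phi_legC, phi_legA] at h
        simp only [Diag.mk.injEq] at h
        obtain ⟨-, -, h3⟩ := h
        split at h3 <;> exact Colour.noConfusion h3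
      | legB b' =>
        rw [phi_legC, phi_legB] at h
        simp only [Diag.mk.injEq] at h
        obtain ⟨-, -, h3⟩ := h
        have hiff : Odd ((n:ℤ) * ((mx - 1) / n)) ↔ ¬ Odd ((n:ℤ) * ((my - 1) / n)) := by
          by_cases hx : Odd ((n:ℤ) * ((mx - 1) / n)) <;>
            by_cases hy : Odd ((n:ℤ) * ((my - 1) / n)) <;>
            simp [hx, hy] at h3 ⊢ <;> exact Colour.noConfusion h3
        have hod : Odd ((n:ℤ) * k) := by
          rw [he, mul_add, Int.odd_add, ← Int.not_odd_iff_even] at hiff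
          tauto
        rw [tpow_odd hod]
        show TVert.legB b = _
        rw [Subsingleton.elim b b']
      | legC b' =>
        rw [phi_legC, phi_legC] at h
        simp only [Diag.mk.injEq] at h
        obtain ⟨-, -, h3⟩ := h
        have hiff : Odd ((n:ℤ) * ((mx - 1) / n)) ↔ Odd ((n:ℤ) * ((my - 1) / n)) := by
          by_cases hx : Odd ((n:ℤ) * ((mx - 1) / n)) <;>
            by_cases hy : Odd ((n:ℤ) * ((my - 1) / n)) <;>
            simp [hx, hy] at h3 ⊢ <;> exact Colour.noConfusion h3
        have hev : Even ((n:ℤ) * k) := by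
          rw [he, mul_add, Int.odd_add] at hiff
          tauto
        rw [tpow_even hev]
        rw [Subsingleton.elim b b']
  · rintro ⟨k, hk⟩
    rw [g_zpow hn, Prod.mk.injEq] at hk
    obtain ⟨h1, h2⟩ := hk
    subst h1; subst h2
    have hc : ((mx + (n:ℤ)*k : ℤ) : ZMod n) = (mx : ZMod n) := by
      push_cast
      rw [ZMod.natCast_self]
      ring
    have he : (mx + (n:ℤ)*k - 1) / n = (mx - 1) / n + k := ediv_shift hn mx k
    by_cases hek : Even ((n:ℤ)*k)
    · rw [tpow_even hek]
      cases vx with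
      | center => rw [phi_center, phi_center, hc]
      | legA a => rw [phi_legA, phi_legA, hc]
      | legB b =>
        rw [phi_legB, phi_legB, hc]
        congr 1
        exact (if_odd_congr (by rw [he, mul_add, Int.odd_add]; simp [hek]) _ _).symm
      | legC b =>
        rw [phi_legC, phi_legC, hc]
        congr 1
        exact (if_odd_congr (by rw [he, mul_add, Int.odd_add]; simp [hek]) _ _).symm
    · have hok : Odd ((n:ℤ)*k) := Int.not_even_iff_odd.mp hek
      rw [tpow_odd hok]
      cases vx with
      | center => rw [phi_center]; show _ = phi n (_, TVert.center); rw [phi_center, hc]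
      | legA a => rw [phi_legA]; show _ = phi n (_, TVert.legA a); rw [phi_legA, hc]
      | legB b =>
        rw [phi_legB]; show _ = phi n (_, TVert.legC b); rw [phi_legC, hc]
        congr 1
        refine (if_odd_flip ?_ _ _).symm
        rw [he, mul_add, Int.odd_add]
        have h' := Int.not_even_iff_odd.mpr hok
        tauto
      | legC b =>
        rw [phi_legC]; show _ = phi n (_, TVert.legB b); rw [phi_legB, hc]
        congr 1
        refine (if_odd_flip ?_ _ _).symm
        rw [he, mul_add, Int.odd_add]
        have h' := Int.not_even_iff_odd.mpr hok
        tauto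

end N4
end GammaAux
namespace GammaAux
section N5
variable {n : ℕ} (hn : 4 ≤ n)
include hn

lemma even_mul_left {z : ℤ} (hpar : ¬ n % 2 = 1) : ¬ Odd ((n:ℤ) * z) := by
  rw [Int.not_odd_iff_even]
  refine Even.mul_right ?_ z
  have : Even n := Nat.even_iff.mpr (by omega)
  exact_mod_cast this

/-- Part 4: `φ` commutes with the translations. -/
lemma phi_tau (x : ℤ × TVert (n-3) 1 1) :
    phi n (ZTau x) = tauD (n-3) 1 1 (phi n x) := by
  obtain ⟨m, v⟩ := x
  show phi n (m - 1, v) = tauD (n-3) 1 1 (phi n (m, v))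
  unfold tauD
  by_cases hd : (n:ℤ) ∣ m - 1
  · have h1 : ((m : ZMod n)) = 1 := (cast_eq_one_iff hn m).mpr hd
    have hmem : phi n (m, v) ∈ PiSetAt (n-3) 1 1 (1 : ZMod n) := h1 ▸ phi_memAt hn m v
    rw [if_pos ⟨rfl, hmem⟩, rho_iter]
    have hdiv : (m - 1 - 1) / n = (m - 1) / n - 1 := by
      have := ediv_pred_dvd hn hd
      rw [show m - 1 - 1 = m - 2 by ring]
      exact this
    by_cases hpar : n % 2 = 1
    · rw [if_pos hpar]
      have hnodd : Odd ((n:ℤ)) := by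
        rw [Int.odd_coe_nat]; exact Nat.odd_iff.mpr hpar
      cases v with
      | center =>
        rw [phi_center, phi_center]
        show _ = rho ⟨(m : ZMod n) - 1, (m:ZMod n) - 1 - 1, Colour.P⟩
        rw [show rho ⟨(m : ZMod n) - 1, (m:ZMod n) - 1 - 1, Colour.P⟩
            = ⟨(m : ZMod n) - 1, (m:ZMod n) - 1 - 1, Colour.P⟩ from rfl]
        push_cast
        rfl
      | legA a =>
        rw [phi_legA, phi_legA]
        show _ = rho ⟨(m : ZMod n) - 1, (m:ZMod n) - 2 - _ - 1, Colour.P⟩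
        rw [show rho ⟨(m : ZMod n) - 1, (m:ZMod n) - 2 - ((a:ℕ):ZMod n) - 1, Colour.P⟩
            = ⟨(m : ZMod n) - 1, (m:ZMod n) - 2 - ((a:ℕ):ZMod n) - 1, Colour.P⟩ from rfl]
        simp only [Diag.mk.injEq]
        refine ⟨by push_cast; ring, by push_cast; ring, trivial⟩
      | legB b =>
        rw [phi_legB, phi_legB]
        by_cases hcol : Odd ((n:ℤ) * ((m - 1) / n))
        · rw [if_pos hcol]
          show _ = rho ⟨(m:ZMod n) - 1, (m:ZMod n) - 1, Colour.B⟩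
          rw [show rho ⟨(m:ZMod n) - 1, (m:ZMod n) - 1, Colour.B⟩
              = ⟨(m:ZMod n) - 1, (m:ZMod n) - 1, Colour.R⟩ from rfl]
          have hnc : ¬ Odd ((n:ℤ) * ((m - 1 - 1) / n)) := by
            rw [hdiv, mul_sub, mul_one, Int.odd_sub]
            intro hc
            exact (Int.not_odd_iff_even.mpr (hc.mp hcol)) hnodd
          rw [if_neg hnc]
          simp only [Diag.mk.injEq]
          refine ⟨by push_cast; ring, by push_cast; ring, trivial⟩
        · rw [if_neg hcol]
          show _ = rho ⟨(m:ZMod n) - 1, (m:ZMod n) - 1, Colour.R⟩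
          rw [show rho ⟨(m:ZMod n) - 1, (m:ZMod n) - 1, Colour.R⟩
              = ⟨(m:ZMod n) - 1, (m:ZMod n) - 1, Colour.B⟩ from rfl]
          have hc2 : Odd ((n:ℤ) * ((m - 1 - 1) / n)) := by
            rw [hdiv, mul_sub, mul_one, Int.odd_sub]
            constructor
            · intro ho; exact absurd ho hcol
            · intro hev; exact absurd hnodd (Int.not_odd_iff_even.mpr hev)
          rw [if_pos hc2]
          simp only [Diag.mk.injEq]
          refine ⟨by push_cast; ring, by push_cast; ring, trivial⟩
      | legC b =>
        rw [phi_legC, phi_legC]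
        by_cases hcol : Odd ((n:ℤ) * ((m - 1) / n))
        · rw [if_pos hcol]
          show _ = rho ⟨(m:ZMod n) - 1, (m:ZMod n) - 1, Colour.R⟩
          rw [show rho ⟨(m:ZMod n) - 1, (m:ZMod n) - 1, Colour.R⟩
              = ⟨(m:ZMod n) - 1, (m:ZMod n) - 1, Colour.B⟩ from rfl]
          have hnc : ¬ Odd ((n:ℤ) * ((m - 1 - 1) / n)) := by
            rw [hdiv, mul_sub, mul_one, Int.odd_sub]
            intro hc
            exact (Int.not_odd_iff_even.mpr (hc.mp hcol)) hnodd
          rw [if_neg hnc]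
          simp only [Diag.mk.injEq]
          refine ⟨by push_cast; ring, by push_cast; ring, trivial⟩
        · rw [if_neg hcol]
          show _ = rho ⟨(m:ZMod n) - 1, (m:ZMod n) - 1, Colour.B⟩
          rw [show rho ⟨(m:ZMod n) - 1, (m:ZMod n) - 1, Colour.B⟩
              = ⟨(m:ZMod n) - 1, (m:ZMod n) - 1, Colour.R⟩ from rfl]
          have hc2 : Odd ((n:ℤ) * ((m - 1 - 1) / n)) := by
            rw [hdiv, mul_sub, mul_one, Int.odd_sub]
            constructor
            · intro ho; exact absurd ho hcol
            · intro hev; exact absurd hnodd (Int.not_odd_iff_even.mpr hev)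
          rw [if_pos hc2]
          simp only [Diag.mk.injEq]
          refine ⟨by push_cast; ring, by push_cast; ring, trivial⟩
    · rw [if_neg hpar]
      cases v with
      | center =>
        rw [phi_center, phi_center]
        show _ = shiftD _
        unfold shiftD
        simp only [Diag.mk.injEq]
        refine ⟨by push_cast; ring, by push_cast; ring, trivial⟩
      | legA a =>
        rw [phi_legA, phi_legA]
        show _ = shiftD _
        unfold shiftD
        simp only [Diag.mk.injEq]
        refine ⟨by push_cast; ring, by push_cast; ring, trivial⟩
      | legB b =>
        rw [phi_legB, phi_legB,
          if_neg (even_mul_left hn hpar), if_neg (even_mul_left hn hpar)]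
        show _ = shiftD _
        unfold shiftD
        simp only [Diag.mk.injEq]
        refine ⟨by push_cast; ring, by push_cast; ring, trivial⟩
      | legC b =>
        rw [phi_legC, phi_legC,
          if_neg (even_mul_left hn hpar), if_neg (even_mul_left hn hpar)]
        show _ = shiftD _
        unfold shiftD
        simp only [Diag.mk.injEq]
        refine ⟨by push_cast; ring, by push_cast; ring, trivial⟩
  · have h1 : ((m : ZMod n)) ≠ 1 := fun hc => hd ((cast_eq_one_iff hn m).mp hc)
    rw [if_neg (fun hc => h1 (by
      rw [← phi_i (n := n) (m, v)]; exact slice_i hn hc.2))]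
    have hdiv : (m - 1 - 1) / n = (m - 1) / n := by
      have := ediv_pred_notdvd hn hd
      rw [show m - 1 - 1 = m - 2 by ring]
      exact this
    cases v with
    | center =>
      rw [phi_center, phi_center]
      show _ = shiftD _
      unfold shiftD
      simp only [Diag.mk.injEq]
      refine ⟨by push_cast; ring, by push_cast; ring, trivial⟩
    | legA a =>
      rw [phi_legA, phi_legA]
      show _ = shiftD _
      unfold shiftD
      simp only [Diag.mk.injEq]
      refine ⟨by push_cast; ring, by push_cast; ring, trivial⟩
    | legB b =>
      rw [phi_legB, phi_legB, hdiv]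
      show _ = shiftD _
      unfold shiftD
      simp only [Diag.mk.injEq]
      refine ⟨by push_cast; ring, by push_cast; ring, trivial⟩
    | legC b =>
      rw [phi_legC, phi_legC, hdiv]
      show _ = shiftD _
      unfold shiftD
      simp only [Diag.mk.injEq]
      refine ⟨by push_cast; ring, by push_cast; ring, trivial⟩

end N5
end GammaAux
namespace GammaAux
section N6
variable {n : ℕ} (hn : 4 ≤ n)
include hn

lemma hA2 : ((n - 3 : ℕ) : ZMod n) + 2 = -1 := by rw [cast3 hn]; ring
lemma hB3 : ((n - 3 : ℕ) : ZMod n) + 3 = 0 := by rw [cast3 hn]; ring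

lemma seam_bounds {a b₀ : Diag n} (h : SeamTwist (n-3) 1 1 n a b₀) :
    a.i = 0 ∧ b₀.i = 1 := by
  obtain ⟨-, -, ⟨d, hd, hda⟩, hb⟩ := h
  refine ⟨?_, slice_i hn hb⟩
  subst hda
  unfold tauD
  rw [if_pos ⟨rfl, hd⟩, rho_iter]
  rcases memAt_elim hn hd with ⟨δ, -, -, rfl⟩ | rfl | rfl <;> split <;>
    simp [rho, shiftD]

lemma no_seam {a b₀ : Diag n} (hii : a.i = b₀.i) : ¬ SeamTwist (n-3) 1 1 n a b₀ := by
  intro h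
  obtain ⟨h0, h1⟩ := seam_bounds hn h
  exact one_ne_zero' hn (by rw [← h1, ← hii, h0])

omit hn

lemma tA_AA {k l : Fin (n-3)} (h : (l:ℕ) + 1 = (k:ℕ)) :
    TArrow (TVert.legA k : TVert (n-3) 1 1) (TVert.legA l) := Or.inl ⟨k, l, h, rfl, rfl⟩

lemma tA_A0 {k : Fin (n-3)} (h : (k:ℕ) = 0) :
    TArrow (TVert.legA k : TVert (n-3) 1 1) TVert.center :=
  Or.inr (Or.inl ⟨k, h, rfl, rfl⟩)

lemma tA_CB (b : Fin 1) :
    TArrow (TVert.center : TVert (n-3) 1 1) (TVert.legB b) :=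
  Or.inr (Or.inr (Or.inl ⟨b, by omega, rfl, rfl⟩))

lemma tA_CC (b : Fin 1) :
    TArrow (TVert.center : TVert (n-3) 1 1) (TVert.legC b) :=
  Or.inr (Or.inr (Or.inr (Or.inr (Or.inl ⟨b, by omega, rfl, rfl⟩))))

include hn

/-- Part 5, `⇐` direction core. -/
lemma zarr_arrow (x z : ℤ × TVert (n-3) 1 1) (h : ZArrow TArrow x z) :
    ArrowD (n-3) 1 1 n (phi n x) (phi n z) := by
  obtain ⟨mx, vx⟩ := x; obtain ⟨mz, vz⟩ := z
  refine ⟨phi_mem hn _, phi_mem hn _, ?_⟩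
  rcases h with ⟨h1, hA⟩ | ⟨h1, hA⟩
  · dsimp only at h1
    replace h1 := h1.symm
    subst h1
    rcases hA with ⟨k, l, hkl, hx, hz⟩ | ⟨k, hk, hx, hz⟩ | ⟨k, hk, hx, hz⟩ |
      ⟨k, l, hkl, hx, hz⟩ | ⟨k, hk, hx, hz⟩ | ⟨k, l, hkl, hx, hz⟩
    · -- legA k → legA l
      subst hx; subst hz
      refine ⟨phi n (mx, TVert.legA l), Or.inl ?_, Or.inr ⟨no_seam hn rfl, rfl⟩⟩
      rw [phi_legA, phi_legA]
      rw [Diag.mk.injEq]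
      refine ⟨rfl, ?_, rfl⟩
      have : ((l:ℕ) : ZMod n) + 1 = ((k:ℕ) : ZMod n) := by exact_mod_cast congrArg (Nat.cast : ℕ → ZMod n) hkl
      linear_combination -this
    · -- legA k (k = 0) → center
      subst hx; subst hz
      refine ⟨phi n (mx, TVert.center), Or.inl ?_, Or.inr ⟨no_seam hn rfl, rfl⟩⟩
      rw [phi_legA, phi_center]
      rw [Diag.mk.injEq]
      refine ⟨rfl, ?_, rfl⟩
      rw [hk]
      push_cast
      ring
    · -- center → legB k
      subst hx; subst hz
      refine ⟨phi n (mx, TVert.legB k), ?_, Or.inr ⟨no_seam hn rfl, rfl⟩⟩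
      rw [phi_center, phi_legB]
      right; right; left
      refine ⟨(mx : ZMod n), by rw [hA2 hn, Diag.mk.injEq]; exact ⟨rfl, by ring, rfl⟩, ?_⟩
      by_cases hcol : Odd ((n:ℤ) * ((mx - 1) / n))
      · right
        rw [if_pos hcol, hB3 hn]
        rw [Diag.mk.injEq]
        exact ⟨by ring, rfl, rfl⟩
      · left
        rw [if_neg hcol, hB3 hn]
        rw [Diag.mk.injEq]
        exact ⟨rfl, by ring, rfl⟩
    · -- legB → legB impossible
      exact absurd hkl (by omega)
    · -- center → legC k
      subst hx; subst hz
      refine ⟨phi n (mx, TVert.legC k), ?_, Or.inr ⟨no_seam hn rfl, rfl⟩⟩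
      rw [phi_center, phi_legC]
      right; right; left
      refine ⟨(mx : ZMod n), by rw [hA2 hn, Diag.mk.injEq]; exact ⟨rfl, by ring, rfl⟩, ?_⟩
      by_cases hcol : Odd ((n:ℤ) * ((mx - 1) / n))
      · left
        rw [if_pos hcol, hB3 hn]
        rw [Diag.mk.injEq]
        exact ⟨rfl, by ring, rfl⟩
      · right
        rw [if_neg hcol, hB3 hn]
        rw [Diag.mk.injEq]
        exact ⟨by ring, rfl, rfl⟩
    · exact absurd hkl (by omega)
  · dsimp only at h1
    subst h1
    rcases hA with ⟨k, l, hkl, hz, hx⟩ | ⟨k, hk, hz, hx⟩ | ⟨k, hk, hz, hx⟩ |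
      ⟨k, l, hkl, hz, hx⟩ | ⟨k, hk, hz, hx⟩ | ⟨k, l, hkl, hz, hx⟩
    · -- z = legA k, x = legA l, l + 1 = k
      subst hx; subst hz
      have hbb : phi n (mx + 1, TVert.legA k)
          = ⟨(mx : ZMod n) + 1, (mx : ZMod n) - 2 - ((l:ℕ) : ZMod n), Colour.P⟩ := by
        rw [phi_legA]
        rw [Diag.mk.injEq]
        have : ((l:ℕ) : ZMod n) + 1 = ((k:ℕ) : ZMod n) := by
          exact_mod_cast congrArg (Nat.cast : ℕ → ZMod n) hkl
        refine ⟨by push_cast; ring, by push_cast; linear_combination this, rfl⟩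
      refine ⟨⟨(mx : ZMod n) + 1, (mx : ZMod n) - 2 - ((l:ℕ) : ZMod n), Colour.P⟩,
        Or.inr (Or.inl ?_), ?_⟩
      · rw [phi_legA]
      · by_cases hseam : SeamTwist (n-3) 1 1 n (phi n (mx, TVert.legA l))
            ⟨(mx : ZMod n) + 1, (mx : ZMod n) - 2 - ((l:ℕ) : ZMod n), Colour.P⟩
        · exact Or.inl ⟨hseam, by rw [hbb]; rfl⟩
        · exact Or.inr ⟨hseam, by rw [hbb]⟩
    · -- z = legA k (k=0), x = center
      subst hx; subst hz
      have hbb : phi n (mx + 1, TVert.legA k)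
          = ⟨(mx : ZMod n) + 1, (mx : ZMod n) - 1, Colour.P⟩ := by
        rw [phi_legA, hk]
        rw [Diag.mk.injEq]
        refine ⟨by push_cast; try ring, by push_cast; try ring, rfl⟩
      refine ⟨⟨(mx : ZMod n) + 1, (mx : ZMod n) - 1, Colour.P⟩,
        Or.inr (Or.inl ?_), ?_⟩
      · rw [phi_center]
      · by_cases hseam : SeamTwist (n-3) 1 1 n (phi n (mx, TVert.center))
            ⟨(mx : ZMod n) + 1, (mx : ZMod n) - 1, Colour.P⟩
        · exact Or.inl ⟨hseam, by rw [hbb]; rfl⟩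
        · exact Or.inr ⟨hseam, by rw [hbb]⟩
    · -- z = center, x = legB k
      subst hx; subst hz
      have hbb : phi n (mx + 1, TVert.center)
          = ⟨(mx : ZMod n) + 1, (mx : ZMod n) + (((n - 3 : ℕ) : ZMod n) + 3), Colour.P⟩ := by
        rw [phi_center, hB3 hn]
        rw [Diag.mk.injEq]
        refine ⟨by push_cast; try ring, by push_cast; try ring, rfl⟩
      refine ⟨⟨(mx : ZMod n) + 1, (mx : ZMod n) + (((n - 3 : ℕ) : ZMod n) + 3), Colour.P⟩,
        ?_, ?_⟩
      · right; right; right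
        refine ⟨(mx : ZMod n), ?_, rfl⟩
        rw [phi_legB, hB3 hn]
        by_cases hcol : Odd ((n:ℤ) * ((mx - 1) / n))
        · right
          rw [if_pos hcol]
          rw [Diag.mk.injEq]
          exact ⟨by ring, rfl, rfl⟩
        · left
          rw [if_neg hcol]
          rw [Diag.mk.injEq]
          exact ⟨rfl, by ring, rfl⟩
      · by_cases hseam : SeamTwist (n-3) 1 1 n (phi n (mx, TVert.legB k))
            ⟨(mx : ZMod n) + 1, (mx : ZMod n) + (((n - 3 : ℕ) : ZMod n) + 3), Colour.P⟩
        · exact Or.inl ⟨hseam, by rw [hbb]; rfl⟩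
        · exact Or.inr ⟨hseam, by rw [hbb]⟩
    · exact absurd hkl (by omega)
    · -- z = center, x = legC k
      subst hx; subst hz
      have hbb : phi n (mx + 1, TVert.center)
          = ⟨(mx : ZMod n) + 1, (mx : ZMod n) + (((n - 3 : ℕ) : ZMod n) + 3), Colour.P⟩ := by
        rw [phi_center, hB3 hn]
        rw [Diag.mk.injEq]
        refine ⟨by push_cast; try ring, by push_cast; try ring, rfl⟩
      refine ⟨⟨(mx : ZMod n) + 1, (mx : ZMod n) + (((n - 3 : ℕ) : ZMod n) + 3), Colour.P⟩,
        ?_, ?_⟩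
      · right; right; right
        refine ⟨(mx : ZMod n), ?_, rfl⟩
        rw [phi_legC, hB3 hn]
        by_cases hcol : Odd ((n:ℤ) * ((mx - 1) / n))
        · left
          rw [if_pos hcol]
          rw [Diag.mk.injEq]
          exact ⟨rfl, by ring, rfl⟩
        · right
          rw [if_neg hcol]
          rw [Diag.mk.injEq]
          exact ⟨by ring, rfl, rfl⟩
      · by_cases hseam : SeamTwist (n-3) 1 1 n (phi n (mx, TVert.legC k))
            ⟨(mx : ZMod n) + 1, (mx : ZMod n) + (((n - 3 : ℕ) : ZMod n) + 3), Colour.P⟩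
        · exact Or.inl ⟨hseam, by rw [hbb]; rfl⟩
        · exact Or.inr ⟨hseam, by rw [hbb]⟩
    · exact absurd hkl (by omega)

end N6
end GammaAux
namespace GammaAux

lemma rho_P' {n : ℕ} (i j : ZMod n) :
    rho ⟨i, j, Colour.P⟩ = ⟨i, j, Colour.P⟩ := rfl
lemma rho_R' {n : ℕ} (i j : ZMod n) :
    rho ⟨i, j, Colour.R⟩ = ⟨j, i, Colour.B⟩ := rfl
lemma rho_B' {n : ℕ} (i j : ZMod n) :
    rho ⟨i, j, Colour.B⟩ = ⟨j, i, Colour.R⟩ := rfl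

section N7
variable {n : ℕ} (hn : 4 ≤ n)
include hn

/-- Part 5, `⇒` direction core. -/
lemma arrow_to (x y : ℤ × TVert (n-3) 1 1)
    (h : ArrowD (n-3) 1 1 n (phi n x) (phi n y)) :
    ∃ y', (∃ k : ℤ, ((shiftPerm n ((treeRhoPerm (n-3) 1) ^ n)) ^ k) y = y') ∧
      ZArrow TArrow x y' := by
  obtain ⟨-, -, b₀, hrot, hb⟩ := h
  have hby : phi n y = b₀ ∨ phi n y = rho b₀ := by
    rcases hb with ⟨-, hb⟩ | ⟨-, hb⟩
    · right; exact hb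
    · left; exact hb
  clear hb
  obtain ⟨mx, vx⟩ := x
  suffices hs : ∃ (m' : ℤ) (w : TVert (n-3) 1 1),
      phi n (m', w) = phi n y ∧ ZArrow TArrow (mx, vx) (m', w) by
    obtain ⟨m', w, hphi, hz⟩ := hs
    obtain ⟨k, hk⟩ := (phi_fiber hn y (m', w)).mp hphi.symm
    exact ⟨(m', w), ⟨k, hk⟩, hz⟩
  cases vx with
  | center =>
    rw [phi_center] at hrot
    rcases hrot with rfl | rfl | ⟨kk, hak, hbo⟩ | ⟨kk, hao, rfl⟩
    · -- R1 : contradiction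
      have hPy : phi n y = ⟨(mx : ZMod n), ((mx : ZMod n) - 1) + 1, Colour.P⟩ := by
        rcases hby with h | h <;> exact h
      obtain ⟨-, hcase⟩ := phi_inv_P hn hPy
      rcases hcase with ⟨-, hj⟩ | ⟨a, -, hj⟩
      · exact absurd (show (1 : ZMod n) = 0 by linear_combination hj) (one_ne_zero' hn)
      · exact absurd (show ((a:ℕ) : ZMod n) = -((2:ℕ) : ZMod n) by
          push_cast; linear_combination hj)
          (fun hc => finA_ne hn (by omega) (by omega) hc)
    · -- R2 : y ~ (mx+1, legA 0)
      have hPy : phi n y = ⟨(mx : ZMod n) + 1, (mx : ZMod n) - 1, Colour.P⟩ := by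
        rcases hby with h | h <;> exact h
      refine ⟨mx + 1, TVert.legA ⟨0, by omega⟩, ?_, Or.inr ⟨rfl, tA_A0 rfl⟩⟩
      rw [phi_legA, hPy, Diag.mk.injEq]
      exact ⟨by push_cast; ring, by push_cast; ring, rfl⟩
    · -- R3 : y ~ (mx, legB/legC)
      rw [Diag.mk.injEq] at hak
      obtain ⟨hk1, -, -⟩ := hak
      subst hk1
      have hz : (mx : ZMod n) + (((n-3:ℕ) : ZMod n) + 3) = (mx : ZMod n) := by
        rw [hB3 hn]; ring
      have hPy : phi n y = ⟨(mx : ZMod n), (mx : ZMod n), Colour.R⟩ ∨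
          phi n y = ⟨(mx : ZMod n), (mx : ZMod n), Colour.B⟩ := by
        rcases hbo with rfl | rfl <;> rcases hby with h | h
        · left; rw [h, hz]
        · right; rw [h, rho_R', hz]
        · right; rw [h, hz]
        · left; rw [h, rho_B', hz]
      by_cases hcol : Odd ((n:ℤ) * ((mx - 1) / n))
      · rcases hPy with hPy | hPy
        · exact ⟨mx, TVert.legC 0, by rw [phi_legC, if_pos hcol, hPy],
            Or.inl ⟨rfl, tA_CC 0⟩⟩
        · exact ⟨mx, TVert.legB 0, by rw [phi_legB, if_pos hcol, hPy],
            Or.inl ⟨rfl, tA_CB 0⟩⟩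
      · rcases hPy with hPy | hPy
        · exact ⟨mx, TVert.legB 0, by rw [phi_legB, if_neg hcol, hPy],
            Or.inl ⟨rfl, tA_CB 0⟩⟩
        · exact ⟨mx, TVert.legC 0, by rw [phi_legC, if_neg hcol, hPy],
            Or.inl ⟨rfl, tA_CC 0⟩⟩
    · -- R4 : colour contradiction
      rcases hao with hak | hak <;>
        exact Colour.noConfusion (congrArg Diag.c hak)
  | legA l =>
    rw [phi_legA] at hrot
    rcases hrot with rfl | rfl | ⟨kk, hak, hbo⟩ | ⟨kk, hao, rfl⟩
    · -- R1
      have hPy : phi n y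
          = ⟨(mx : ZMod n), ((mx : ZMod n) - 2 - ((l:ℕ) : ZMod n)) + 1, Colour.P⟩ := by
        rcases hby with h | h <;> exact h
      by_cases hl : (l : ℕ) = 0
      · refine ⟨mx, TVert.center, ?_, Or.inl ⟨rfl, tA_A0 hl⟩⟩
        rw [phi_center, hPy, Diag.mk.injEq]
        have hc : ((l:ℕ) : ZMod n) = 0 := by rw [hl]; exact Nat.cast_zero
        exact ⟨rfl, by linear_combination hc, rfl⟩
      · refine ⟨mx, TVert.legA ⟨(l:ℕ) - 1, by have := l.isLt; omega⟩, ?_,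
          Or.inl ⟨rfl, tA_AA (by show (l:ℕ) - 1 + 1 = (l:ℕ); omega)⟩⟩
        rw [phi_legA, hPy, Diag.mk.injEq]
        have hc : (((l:ℕ) - 1 : ℕ) : ZMod n) = ((l:ℕ) : ZMod n) - 1 := by
          have h1 : (1:ℕ) ≤ (l:ℕ) := by omega
          push_cast [Nat.cast_sub h1]
          ring
        exact ⟨rfl, by rw [hc]; ring, rfl⟩
    · -- R2
      have hPy : phi n y
          = ⟨(mx : ZMod n) + 1, (mx : ZMod n) - 2 - ((l:ℕ) : ZMod n), Colour.P⟩ := by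
        rcases hby with h | h <;> exact h
      obtain ⟨-, hcase⟩ := phi_inv_P hn hPy
      rcases hcase with ⟨-, hj⟩ | ⟨a, -, hj⟩
      · exact absurd (show ((l:ℕ) : ZMod n) = -((2:ℕ) : ZMod n) by
          push_cast; linear_combination -hj)
          (fun hc => finA_ne hn (by omega) (by omega) hc)
      · have ha : ((a:ℕ) : ZMod n) = (((l:ℕ) + 1 : ℕ) : ZMod n) := by
          push_cast; linear_combination hj
        have haN : (a:ℕ) = (l:ℕ) + 1 :=
          nat_inj hn (by have := a.isLt; omega) (by have := l.isLt; omega) ha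
        refine ⟨mx + 1, TVert.legA a, ?_, Or.inr ⟨rfl, tA_AA haN.symm⟩⟩
        rw [phi_legA, hPy, Diag.mk.injEq]
        refine ⟨by push_cast; ring, ?_, rfl⟩
        push_cast
        push_cast at ha
        linear_combination -ha
    · -- R3 : contradiction l = -1
      rw [Diag.mk.injEq] at hak
      obtain ⟨hk1, hk2, -⟩ := hak
      rw [← hk1, hA2 hn] at hk2
      exact absurd (show ((l:ℕ) : ZMod n) = -((1:ℕ) : ZMod n) by
        push_cast; linear_combination -hk2)
        (fun hc => finA_ne hn (by omega) (by omega) hc)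
    · -- R4 : colour contradiction
      rcases hao with hak | hak <;>
        exact Colour.noConfusion (congrArg Diag.c hak)
  | legB b =>
    by_cases hcol : Odd ((n:ℤ) * ((mx - 1) / n))
    · rw [phi_legB, if_pos hcol] at hrot
      rcases hrot with rfl | rfl | ⟨kk, hak, hbo⟩ | ⟨kk, hao, rfl⟩
      · rcases hby with h | h
        · have := phi_offdiag hn h (fun hc => Colour.noConfusion hc)
          exact absurd (show (1 : ZMod n) = 0 by linear_combination -this)
            (one_ne_zero' hn)
        · rw [rho_B'] at h
          have := phi_offdiag hn h (fun hc => Colour.noConfusion hc)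
          exact absurd (show (1 : ZMod n) = 0 by linear_combination this)
            (one_ne_zero' hn)
      · rcases hby with h | h
        · have := phi_offdiag hn h (fun hc => Colour.noConfusion hc)
          exact absurd (show (1 : ZMod n) = 0 by linear_combination this)
            (one_ne_zero' hn)
        · rw [rho_B'] at h
          have := phi_offdiag hn h (fun hc => Colour.noConfusion hc)
          exact absurd (show (1 : ZMod n) = 0 by linear_combination -this)
            (one_ne_zero' hn)
      · rw [Diag.mk.injEq] at hak
        exact Colour.noConfusion hak.2.2
      · rcases hao with hak | hak
        · rw [Diag.mk.injEq] at hak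
          exact Colour.noConfusion hak.2.2
        · rw [Diag.mk.injEq] at hak
          obtain ⟨-, hk2, -⟩ := hak
          subst hk2
          have hPy : phi n y
              = ⟨(mx : ZMod n) + 1, (mx : ZMod n) + (((n-3:ℕ) : ZMod n) + 3),
                  Colour.P⟩ := by
            rcases hby with h | h <;> exact h
          refine ⟨mx + 1, TVert.center, ?_, Or.inr ⟨rfl, tA_CB b⟩⟩
          rw [phi_center, hPy, Diag.mk.injEq]
          have h3 := hB3 hn
          exact ⟨by push_cast; ring, by push_cast; linear_combination -h3, rfl⟩
    · rw [phi_legB, if_neg hcol] at hrot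
      rcases hrot with rfl | rfl | ⟨kk, hak, hbo⟩ | ⟨kk, hao, rfl⟩
      · rcases hby with h | h
        · have := phi_offdiag hn h (fun hc => Colour.noConfusion hc)
          exact absurd (show (1 : ZMod n) = 0 by linear_combination -this)
            (one_ne_zero' hn)
        · rw [rho_R'] at h
          have := phi_offdiag hn h (fun hc => Colour.noConfusion hc)
          exact absurd (show (1 : ZMod n) = 0 by linear_combination this)
            (one_ne_zero' hn)
      · rcases hby with h | h
        · have := phi_offdiag hn h (fun hc => Colour.noConfusion hc)
          exact absurd (show (1 : ZMod n) = 0 by linear_combination this)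
            (one_ne_zero' hn)
        · rw [rho_R'] at h
          have := phi_offdiag hn h (fun hc => Colour.noConfusion hc)
          exact absurd (show (1 : ZMod n) = 0 by linear_combination -this)
            (one_ne_zero' hn)
      · rw [Diag.mk.injEq] at hak
        exact Colour.noConfusion hak.2.2
      · rcases hao with hak | hak
        · rw [Diag.mk.injEq] at hak
          obtain ⟨hk1, -, -⟩ := hak
          subst hk1
          have hPy : phi n y
              = ⟨(mx : ZMod n) + 1, (mx : ZMod n) + (((n-3:ℕ) : ZMod n) + 3),
                  Colour.P⟩ := by
            rcases hby with h | h <;> exact h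
          refine ⟨mx + 1, TVert.center, ?_, Or.inr ⟨rfl, tA_CB b⟩⟩
          rw [phi_center, hPy, Diag.mk.injEq]
          have h3 := hB3 hn
          exact ⟨by push_cast; ring, by push_cast; linear_combination -h3, rfl⟩
        · rw [Diag.mk.injEq] at hak
          exact Colour.noConfusion hak.2.2
  | legC b =>
    by_cases hcol : Odd ((n:ℤ) * ((mx - 1) / n))
    · rw [phi_legC, if_pos hcol] at hrot
      rcases hrot with rfl | rfl | ⟨kk, hak, hbo⟩ | ⟨kk, hao, rfl⟩
      · rcases hby with h | h
        · have := phi_offdiag hn h (fun hc => Colour.noConfusion hc)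
          exact absurd (show (1 : ZMod n) = 0 by linear_combination -this)
            (one_ne_zero' hn)
        · rw [rho_R'] at h
          have := phi_offdiag hn h (fun hc => Colour.noConfusion hc)
          exact absurd (show (1 : ZMod n) = 0 by linear_combination this)
            (one_ne_zero' hn)
      · rcases hby with h | h
        · have := phi_offdiag hn h (fun hc => Colour.noConfusion hc)
          exact absurd (show (1 : ZMod n) = 0 by linear_combination this)
            (one_ne_zero' hn)
        · rw [rho_R'] at h
          have := phi_offdiag hn h (fun hc => Colour.noConfusion hc)
          exact absurd (show (1 : ZMod n) = 0 by linear_combination -this)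
            (one_ne_zero' hn)
      · rw [Diag.mk.injEq] at hak
        exact Colour.noConfusion hak.2.2
      · rcases hao with hak | hak
        · rw [Diag.mk.injEq] at hak
          obtain ⟨hk1, -, -⟩ := hak
          subst hk1
          have hPy : phi n y
              = ⟨(mx : ZMod n) + 1, (mx : ZMod n) + (((n-3:ℕ) : ZMod n) + 3),
                  Colour.P⟩ := by
            rcases hby with h | h <;> exact h
          refine ⟨mx + 1, TVert.center, ?_, Or.inr ⟨rfl, tA_CC b⟩⟩
          rw [phi_center, hPy, Diag.mk.injEq]
          have h3 := hB3 hn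
          exact ⟨by push_cast; ring, by push_cast; linear_combination -h3, rfl⟩
        · rw [Diag.mk.injEq] at hak
          exact Colour.noConfusion hak.2.2
    · rw [phi_legC, if_neg hcol] at hrot
      rcases hrot with rfl | rfl | ⟨kk, hak, hbo⟩ | ⟨kk, hao, rfl⟩
      · rcases hby with h | h
        · have := phi_offdiag hn h (fun hc => Colour.noConfusion hc)
          exact absurd (show (1 : ZMod n) = 0 by linear_combination -this)
            (one_ne_zero' hn)
        · rw [rho_B'] at h
          have := phi_offdiag hn h (fun hc => Colour.noConfusion hc)
          exact absurd (show (1 : ZMod n) = 0 by linear_combination this)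
            (one_ne_zero' hn)
      · rcases hby with h | h
        · have := phi_offdiag hn h (fun hc => Colour.noConfusion hc)
          exact absurd (show (1 : ZMod n) = 0 by linear_combination this)
            (one_ne_zero' hn)
        · rw [rho_B'] at h
          have := phi_offdiag hn h (fun hc => Colour.noConfusion hc)
          exact absurd (show (1 : ZMod n) = 0 by linear_combination -this)
            (one_ne_zero' hn)
      · rw [Diag.mk.injEq] at hak
        exact Colour.noConfusion hak.2.2
      · rcases hao with hak | hak
        · rw [Diag.mk.injEq] at hak
          exact Colour.noConfusion hak.2.2
        · rw [Diag.mk.injEq] at hak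
          obtain ⟨-, hk2, -⟩ := hak
          subst hk2
          have hPy : phi n y
              = ⟨(mx : ZMod n) + 1, (mx : ZMod n) + (((n-3:ℕ) : ZMod n) + 3),
                  Colour.P⟩ := by
            rcases hby with h | h <;> exact h
          refine ⟨mx + 1, TVert.center, ?_, Or.inr ⟨rfl, tA_CC b⟩⟩
          rw [phi_center, hPy, Diag.mk.injEq]
          have h3 := hB3 hn
          exact ⟨by push_cast; ring, by push_cast; linear_combination -h3, rfl⟩
end N7
end GammaAux
/-- cluster category of type `D_n`. For every `n ≥ 4`, the
quiver `Γ^{n}_{n-3,1,1}` of coloured oriented single and paired diagonals of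
a regular `n`-gon, associated to the tree `T_{n-3,1,1} = D_n` (the "single"
diagonals being non-contractible loops in the once-punctured `n`-gon), is
isomorphic, as a stable translation quiver, to `ℤ D_n / ⟨τ^{-n} ρ^{n}⟩`, the
AR-quiver of the cluster category `C_{D_n} = D^b(mod k D_n)/τ^{-1}Σ` (on
`ℤ D_n` the shift `Σ` acts as `τ^{-(n-1)}` composed with the diagram
automorphism `ρ` when `n` is odd, and as `τ^{-(n-1)}` when `n` is even). -/
theorem gamma_iso_ZDn_quotient (n : ℕ) (hn : 4 ≤ n) :
    ∃ φ : ℤ × TVert (n - 3) 1 1 → Diag n,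
      IsQuotientIso (n - 3) 1 1 n TArrow
        (shiftPerm n ((treeRhoPerm (n - 3) 1) ^ n)) φ := by
  refine ⟨GammaAux.phi n, GammaAux.phi_mem hn, GammaAux.phi_surj hn,
    GammaAux.phi_fiber hn, GammaAux.phi_tau hn, fun x y => ⟨?_, ?_⟩⟩
  · exact GammaAux.arrow_to hn x y
  · rintro ⟨y', ⟨k, hk⟩, hz⟩
    have h1 : GammaAux.phi n y = GammaAux.phi n y' :=
      (GammaAux.phi_fiber hn y y').mpr ⟨k, hk⟩
    have h2 := GammaAux.zarr_arrow hn x y' hz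
    rwa [← h1] at h2
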